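/- arXiv:2505.19585 — 2 statements merged into one kernel-verified Lean document; each statement's English description precedes it below -/
import Mathlib

section
/- Let e₁,...,eₙ be real numbers (validation residuals) and let q be any real number that is at least ⌈(n+1)(1−δ)⌉-th smallest among e₁,...,eₙ (for (n+1)(1−δ) ≤ n). If a new residual e_{n+1} is exchangeable with e₁,...,eₙ, then P(e_{n+1} ≤ q) ≥ 1 − δ. -/
open MeasureTheory ENNReal

private lemma scc_card_filter_val_lt (N k : ℕ) (hk : k ≤ N) :
    (Finset.univ.filter fun m : Fin N => (m : ℕ) < k).card = k := by
  have : (Finset.univ.filter fun m : Fin N => (m : ℕ) < k)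
      = Finset.map ⟨fun a : Fin k => Fin.castLE hk a, fun a b h => by
          simpa [Fin.ext_iff] using h⟩ Finset.univ := by
    ext m
    simp only [Finset.mem_filter, Finset.mem_univ, true_and, Finset.mem_map,
      Function.Embedding.coeFn_mk]
    constructor
    · intro h; exact ⟨⟨m, h⟩, rfl⟩
    · rintro ⟨a, rfl⟩; exact a.2
  rw [this, Finset.card_map, Finset.card_univ, Fintype.card_fin]

private lemma scc_key_count {N k : ℕ} (hk : k ≤ N) (x : Fin N → ℝ) :
    k ≤ (Finset.univ.filter fun j : Fin N =>
      (Finset.univ.filter fun i : Fin N => x i < x j ∧ i ≠ j).card < k).card := by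
  classical
  set σ := Tuple.sort x with hσ
  have hmono : Monotone (x ∘ σ) := Tuple.monotone_sort x
  have hmem : ∀ m : Fin N, (m : ℕ) < k →
      (Finset.univ.filter fun i : Fin N => x i < x (σ m) ∧ i ≠ σ m).card < k := by
    intro m hm
    have hsub : (Finset.univ.filter fun i : Fin N => x i < x (σ m) ∧ i ≠ σ m)
        ⊆ Finset.map σ.toEmbedding (Finset.univ.filter fun t : Fin N => (t : ℕ) < (m : ℕ)) := by
      intro i hi
      simp only [Finset.mem_filter, Finset.mem_univ, true_and] at hi
      simp only [Finset.mem_map, Finset.mem_filter, Finset.mem_univ, true_and,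
        Equiv.coe_toEmbedding]
      refine ⟨σ.symm i, ?_, by simp⟩
      by_contra hle
      push_neg at hle
      have : x (σ m) ≤ x (σ (σ.symm i)) := hmono (by exact_mod_cast hle)
      simp only [Equiv.apply_symm_apply] at this
      exact absurd hi.1 (not_lt.2 this)
    calc (Finset.univ.filter fun i : Fin N => x i < x (σ m) ∧ i ≠ σ m).card
        ≤ _ := Finset.card_le_card hsub
      _ = (m : ℕ) := by
          rw [Finset.card_map, scc_card_filter_val_lt N m (le_of_lt m.2)]
      _ < k := hm
  have hsub2 : Finset.map σ.toEmbedding (Finset.univ.filter fun m : Fin N => (m : ℕ) < k)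
      ⊆ (Finset.univ.filter fun j : Fin N =>
        (Finset.univ.filter fun i : Fin N => x i < x j ∧ i ≠ j).card < k) := by
    intro j hj
    simp only [Finset.mem_map, Finset.mem_filter, Finset.mem_univ, true_and,
      Equiv.coe_toEmbedding] at hj ⊢
    obtain ⟨m, hm, rfl⟩ := hj
    exact hmem m hm
  calc k = (Finset.map σ.toEmbedding (Finset.univ.filter fun m : Fin N => (m : ℕ) < k)).card := by
        rw [Finset.card_map, scc_card_filter_val_lt N k hk]
    _ ≤ _ := Finset.card_le_card hsub2

theorem split_conformal_coverage {Ω : Type*} [MeasurableSpace Ω]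
    (μ : Measure Ω) [IsProbabilityMeasure μ] (n : ℕ) (δ : ℝ)
    (e : Fin (n + 1) → Ω → ℝ) (hmeas : ∀ i, Measurable (e i))
    (hexch : ∀ π : Equiv.Perm (Fin (n + 1)),
      Measure.map (fun ω => fun i => e (π i) ω) μ = Measure.map (fun ω => fun i => e i ω) μ)
    (hk : ((n : ℝ) + 1) * (1 - δ) ≤ n)
    (Q : (Fin n → ℝ) → ℝ) (hQmeas : Measurable Q)
    (hQ : ∀ v : Fin n → ℝ,
      (⌈((n : ℝ) + 1) * (1 - δ)⌉.toNat) ≤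
        (Finset.univ.filter fun i : Fin n => v i ≤ Q v).card) :
    ENNReal.ofReal (1 - δ) ≤
      μ {ω | e (Fin.last n) ω ≤ Q fun i => e i.castSucc ω} := by
  classical
  set k : ℕ := (⌈((n : ℝ) + 1) * (1 - δ)⌉).toNat with hkdef
  by_cases hδ : 1 - δ ≤ 0
  · simpa [ENNReal.ofReal_eq_zero.2 hδ] using zero_le _
  push_neg at hδ
  have hy0 : (0:ℝ) ≤ ((n : ℝ) + 1) * (1 - δ) := by positivity
  have hkreal : ((n : ℝ) + 1) * (1 - δ) ≤ (k : ℝ) := by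
    calc ((n : ℝ) + 1) * (1 - δ) ≤ (⌈((n : ℝ) + 1) * (1 - δ)⌉ : ℝ) := Int.le_ceil _
      _ ≤ (k : ℝ) := by
        rw [hkdef]
        have h := Int.self_le_toNat ⌈((n : ℝ) + 1) * (1 - δ)⌉
        exact_mod_cast h
  have hkn : k ≤ n + 1 := by
    have h1 : ⌈((n : ℝ) + 1) * (1 - δ)⌉ ≤ (n : ℤ) := Int.ceil_le.2 (by exact_mod_cast hk)
    have h2 : k ≤ n := Int.toNat_le.2 (by exact_mod_cast h1)
    omega
  set X : Ω → (Fin (n + 1) → ℝ) := fun ω i => e i ω with hXdef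
  have hX : Measurable X := measurable_pi_lambda _ hmeas
  set c : (Fin (n + 1) → ℝ) → Fin (n + 1) → ℕ :=
    fun x j => (Finset.univ.filter fun i => x i < x j ∧ i ≠ j).card with hcdef
  set S : Fin (n + 1) → Set (Fin (n + 1) → ℝ) := fun j => {x | c x j < k} with hSdef
  have hcmeas : ∀ j, Measurable fun x => c x j := by
    intro j
    have hrw : (fun x : Fin (n + 1) → ℝ => c x j)
        = fun x => ∑ i, if x i < x j ∧ i ≠ j then 1 else 0 := by
      funext x
      simp only [hcdef]
      exact Finset.card_filter _ _
    rw [hrw]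
    refine Finset.measurable_sum _ (fun i _ => ?_)
    refine Measurable.ite ?_ measurable_const measurable_const
    by_cases hij : i = j
    · have : {x : Fin (n + 1) → ℝ | x i < x j ∧ i ≠ j} = ∅ := by
        ext x; simp [hij]
      rw [this]; exact MeasurableSet.empty
    · have : {x : Fin (n + 1) → ℝ | x i < x j ∧ i ≠ j} = {x | x i < x j} := by
        ext x; simp [hij]
      rw [this]; exact measurableSet_lt (measurable_pi_apply i) (measurable_pi_apply j)
  have hS : ∀ j, MeasurableSet (S j) := by
    intro j
    have : S j = (fun x => c x j) ⁻¹' (Set.Iio k) := rfl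
    rw [this]
    exact (hcmeas j) ((Set.finite_Iio k).measurableSet)
  -- exchangeability: all marginal events have the same measure
  have hswap : ∀ j, μ (X ⁻¹' S j) = μ (X ⁻¹' S (Fin.last n)) := by
    intro j
    set π := Equiv.swap j (Fin.last n) with hπ
    have hT : Measurable fun x : Fin (n + 1) → ℝ => (fun i => x (π i)) :=
      measurable_pi_lambda _ fun i => measurable_pi_apply _
    have hpre : S j = (fun x : Fin (n + 1) → ℝ => fun i => x (π i)) ⁻¹' S (Fin.last n) := by
      ext x
      simp only [hSdef, Set.mem_setOf_eq, Set.mem_preimage]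
      have hcard : c x j = c (fun i => x (π i)) (Fin.last n) := by
        simp only [hcdef]
        refine Finset.card_equiv π.symm (fun i => ?_)
        simp only [Finset.mem_filter, Finset.mem_univ, true_and]
        have h1 : x (π (π.symm i)) = x i := by rw [Equiv.apply_symm_apply]
        have h2 : x (π (Fin.last n)) = x j := by
          rw [hπ, Equiv.swap_apply_right]
        rw [h1, h2]
        have hπj : π (Fin.last n) = j := Equiv.swap_apply_right j (Fin.last n)
        have hπsymm : π.symm j = Fin.last n := by rw [← hπj, Equiv.symm_apply_apply]
        have h3 : π.symm i ≠ Fin.last n ↔ i ≠ j := by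
          rw [← hπsymm, ne_eq, ne_eq, EmbeddingLike.apply_eq_iff_eq]
        tauto
      rw [hcard]
    rw [hpre, ← Set.preimage_comp]
    have h1 : ((fun x : Fin (n + 1) → ℝ => fun i => x (π i)) ∘ X)
        = fun ω => fun i => e (π i) ω := rfl
    have h2 : μ (((fun x : Fin (n + 1) → ℝ => fun i => x (π i)) ∘ X) ⁻¹' S (Fin.last n))
        = Measure.map (fun ω => fun i => e (π i) ω) μ (S (Fin.last n)) := by
      rw [h1, Measure.map_apply (measurable_pi_lambda _ fun i => hmeas (π i)) (hS _)]
    rw [h2, hexch π, Measure.map_apply hX (hS _)]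
  -- lower bound on the sum of the measures
  have hlow : (k : ℝ≥0∞) ≤ ∑ j : Fin (n + 1), μ (X ⁻¹' S j) := by
    have hpt : ∀ ω, (k : ℝ≥0∞) ≤
        ∑ j : Fin (n + 1), Set.indicator (X ⁻¹' S j) (fun _ => (1 : ℝ≥0∞)) ω := by
      intro ω
      have hcount := scc_key_count hkn (X ω)
      have hsumeq : ∑ j : Fin (n + 1), Set.indicator (X ⁻¹' S j) (fun _ => (1 : ℝ≥0∞)) ω
          = ((Finset.univ.filter fun j : Fin (n + 1) => c (X ω) j < k).card : ℝ≥0∞) := by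
        rw [← Finset.sum_boole]
        refine Finset.sum_congr rfl (fun j _ => ?_)
        by_cases h : c (X ω) j < k
        · rw [if_pos h, Set.indicator_of_mem]
          exact h
        · rw [if_neg h, Set.indicator_of_notMem]
          exact h
      rw [hsumeq]
      exact_mod_cast hcount
    calc (k : ℝ≥0∞) = ∫⁻ _, (k : ℝ≥0∞) ∂μ := by simp
      _ ≤ ∫⁻ ω, ∑ j : Fin (n + 1),
            Set.indicator (X ⁻¹' S j) (fun _ => (1 : ℝ≥0∞)) ω ∂μ := lintegral_mono hpt
      _ = ∑ j : Fin (n + 1), ∫⁻ ω,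
            Set.indicator (X ⁻¹' S j) (fun _ => (1 : ℝ≥0∞)) ω ∂μ :=
          lintegral_finset_sum _ (fun j _ => measurable_const.indicator (hX (hS j)))
      _ = ∑ j : Fin (n + 1), μ (X ⁻¹' S j) := by
          refine Finset.sum_congr rfl (fun j _ => ?_)
          exact lintegral_indicator_one (hX (hS j))
  have hsum : ∑ j : Fin (n + 1), μ (X ⁻¹' S j)
      = ((n : ℝ≥0∞) + 1) * μ (X ⁻¹' S (Fin.last n)) := by
    rw [Finset.sum_congr rfl (fun j _ => hswap j), Finset.sum_const, Finset.card_univ,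
      Fintype.card_fin, nsmul_eq_mul]
    push_cast
    ring
  -- the key event is contained in the coverage event
  have hBA : X ⁻¹' S (Fin.last n) ⊆ {ω | e (Fin.last n) ω ≤ Q fun i => e i.castSucc ω} := by
    intro ω hω
    simp only [Set.mem_preimage, hSdef, Set.mem_setOf_eq] at hω
    by_contra hlt
    simp only [Set.mem_setOf_eq, not_le] at hlt
    have hQv := hQ (fun i => e i.castSucc ω)
    have hle : (Finset.univ.filter fun i : Fin n =>
          (fun i => e i.castSucc ω) i ≤ Q (fun i => e i.castSucc ω)).card
        ≤ c (X ω) (Fin.last n) := by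
      apply Finset.card_le_card_of_injOn (fun i => i.castSucc)
      · intro i hi
        simp only [Finset.mem_coe, Finset.mem_filter, Finset.mem_univ, true_and] at hi ⊢
        constructor
        · exact lt_of_le_of_lt hi hlt
        · exact (Fin.castSucc_lt_last i).ne
      · intro a _ b _ h
        exact Fin.castSucc_injective _ h
    have hle' : (Finset.univ.filter fun i : Fin n =>
          e i.castSucc ω ≤ Q fun i => e i.castSucc ω).card
        ≤ c (X ω) (Fin.last n) := hle
    omega
  have hmono : μ (X ⁻¹' S (Fin.last n))
      ≤ μ {ω | e (Fin.last n) ω ≤ Q fun i => e i.castSucc ω} := measure_mono hBA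
  -- conclude
  have hne0 : ((n : ℝ≥0∞) + 1) ≠ 0 := by simp
  have hnetop : ((n : ℝ≥0∞) + 1) ≠ ⊤ := by
    simp [ENNReal.add_ne_top]
  rw [← ENNReal.mul_le_mul_iff_right hne0 hnetop]
  calc ((n : ℝ≥0∞) + 1) * ENNReal.ofReal (1 - δ)
      = ENNReal.ofReal (((n : ℝ) + 1) * (1 - δ)) := by
        rw [ENNReal.ofReal_mul (by positivity)]
        congr 1
        rw [ENNReal.ofReal_add (Nat.cast_nonneg n) zero_le_one, ENNReal.ofReal_natCast,
          ENNReal.ofReal_one]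
    _ ≤ (k : ℝ≥0∞) := by
        calc ENNReal.ofReal (((n : ℝ) + 1) * (1 - δ)) ≤ ENNReal.ofReal (k : ℝ) :=
              ENNReal.ofReal_le_ofReal hkreal
          _ = (k : ℝ≥0∞) := ENNReal.ofReal_natCast k
    _ ≤ ((n : ℝ≥0∞) + 1) * μ (X ⁻¹' S (Fin.last n)) := by rw [← hsum]; exact hlow
    _ ≤ ((n : ℝ≥0∞) + 1) * μ {ω | e (Fin.last n) ω ≤ Q fun i => e i.castSucc ω} := by
        exact mul_le_mul_right hmono _
end

section
/- Let e₁,...,e_{n+1} be exchangeable nonnegative random variables and u₁,...,u_{n+1} positive constants (uncertainty measures). Define scores sᵢ = eᵢ/uᵢ and suppose s₁,...,s_{n+1} are exchangeable. Let q be the ⌈(n+1)(1−δ)⌉-th smallest of s₁,...,sₙ. Then P(e_{n+1} ≤ u_{n+1}·q) ≥ 1 − δ. -/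
open MeasureTheory
open scoped ENNReal NNReal

/-- The permutation sending `last` to `i` and `castSucc j` to `i.succAbove j`. -/
noncomputable def insertPerm {n : ℕ} (i : Fin (n + 1)) : Equiv.Perm (Fin (n + 1)) :=
  Equiv.ofBijective (Fin.lastCases i i.succAbove) <| by
    rw [Finite.injective_iff_bijective.symm]
    intro a b hab
    induction a using Fin.lastCases with
    | last =>
      induction b using Fin.lastCases with
      | last => rfl
      | cast b => simp only [Fin.lastCases_last, Fin.lastCases_castSucc] at hab
                  exact absurd hab.symm (Fin.succAbove_ne i b)
    | cast a =>
      induction b using Fin.lastCases with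
      | last => simp only [Fin.lastCases_last, Fin.lastCases_castSucc] at hab
                exact absurd hab (Fin.succAbove_ne i a)
      | cast b =>
        simp only [Fin.lastCases_castSucc] at hab
        rw [Fin.succAbove_right_injective hab]

@[simp] lemma insertPerm_last {n : ℕ} (i : Fin (n + 1)) : insertPerm i (Fin.last n) = i := by
  simp [insertPerm]

@[simp] lemma insertPerm_castSucc {n : ℕ} (i : Fin (n + 1)) (j : Fin n) :
    insertPerm i j.castSucc = i.succAbove j := by
  simp [insertPerm]

/-- Deterministic counting lemma: if for every `n`-vector `w` at least `k` coordinates of `w`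
are `≤ Q w`, then for every `(n+1)`-vector `v` at least `k` indices `i` satisfy
`v i ≤ Q (v ∘ i.succAbove)`. -/
lemma count_lemma {n k : ℕ} (hkn : k ≤ n) (Q : (Fin n → ℝ) → ℝ)
    (hQ : ∀ w : Fin n → ℝ, k ≤ (Finset.univ.filter fun j : Fin n => w j ≤ Q w).card)
    (v : Fin (n + 1) → ℝ) :
    k ≤ (Finset.univ.filter fun i : Fin (n + 1) => v i ≤ Q (v ∘ i.succAbove)).card := by
  classical
  set σ := Tuple.sort v with hσ
  have hmono : Monotone (v ∘ σ) := Tuple.monotone_sort v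
  have hk1 : k < n + 1 := Nat.lt_succ_of_le hkn
  have hsub : (Finset.Iio (⟨k, hk1⟩ : Fin (n + 1))).image σ ⊆
      Finset.univ.filter fun i : Fin (n + 1) => v i ≤ Q (v ∘ i.succAbove) := by
    intro i hi
    simp only [Finset.mem_image, Finset.mem_Iio] at hi
    obtain ⟨m, hm, rfl⟩ := hi
    have hmk : (m : ℕ) < k := hm
    simp only [Finset.mem_filter, Finset.mem_univ, true_and]
    by_contra hlt
    push_neg at hlt
    set w : Fin n → ℝ := v ∘ (σ m).succAbove with hw
    -- all coordinates counted by hQ w are < v (σ m)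
    have h1 : (Finset.univ.filter fun j : Fin n => w j ≤ Q w) ⊆
        (Finset.univ.filter fun j : Fin n => w j < v (σ m)) := by
      intro j hj
      simp only [Finset.mem_filter, Finset.mem_univ, true_and] at hj ⊢
      exact lt_of_le_of_lt hj hlt
    -- injection j ↦ σ.symm ((σ m).succAbove j) into Iio m
    have h2 : (Finset.univ.filter fun j : Fin n => w j < v (σ m)).card ≤
        (Finset.Iio m).card := by
      apply Finset.card_le_card_of_injOn (fun j => σ.symm ((σ m).succAbove j))
      · intro j hj
        simp only [Finset.mem_coe, Finset.mem_filter, Finset.mem_univ, true_and] at hj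
        simp only [Finset.mem_coe, Finset.mem_Iio]
        by_contra hle
        push_neg at hle
        have := hmono hle
        simp only [Function.comp_apply, Equiv.apply_symm_apply] at this
        exact absurd (lt_of_le_of_lt this hj) (lt_irrefl _)
      · intro a _ b _ hab
        exact Fin.succAbove_right_injective (σ.symm.injective hab)
    have h3 : (Finset.Iio m).card = (m : ℕ) := by simp
    have := (hQ w).trans ((Finset.card_le_card h1).trans h2)
    rw [h3] at this
    omega
  calc k = ((Finset.Iio (⟨k, hk1⟩ : Fin (n + 1))).image σ).card := by
        rw [Finset.card_image_of_injective _ σ.injective]; simp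
    _ ≤ _ := Finset.card_le_card hsub

theorem adaptive_conformal_coverage {Ω : Type*} [MeasurableSpace Ω]
    (μ : Measure Ω) [IsProbabilityMeasure μ] (n : ℕ) (δ : ℝ)
    (e : Fin (n + 1) → Ω → ℝ) (hmeas : ∀ i, Measurable (e i))
    (hnonneg : ∀ i ω, 0 ≤ e i ω)
    (u : Fin (n + 1) → ℝ) (hu : ∀ i, 0 < u i)
    (hexch : ∀ π : Equiv.Perm (Fin (n + 1)),
      Measure.map (fun ω => fun i => e (π i) ω / u (π i)) μ =
        Measure.map (fun ω => fun i => e i ω / u i) μ)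
    (hk : ((n : ℝ) + 1) * (1 - δ) ≤ n)
    (Q : (Fin n → ℝ) → ℝ) (hQmeas : Measurable Q)
    (hQ : ∀ v : Fin n → ℝ,
      (⌈((n : ℝ) + 1) * (1 - δ)⌉.toNat) ≤
        (Finset.univ.filter fun i : Fin n => v i ≤ Q v).card) :
    ENNReal.ofReal (1 - δ) ≤
      μ {ω | e (Fin.last n) ω ≤
        u (Fin.last n) * Q fun i => e i.castSucc ω / u i.castSucc} := by
  classical
  by_cases hδ : 1 - δ ≤ 0
  · rw [ENNReal.ofReal_eq_zero.mpr hδ]; exact zero_le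
  push_neg at hδ
  set k : ℕ := (⌈((n : ℝ) + 1) * (1 - δ)⌉).toNat with hkdef
  have hceil_le : (⌈((n : ℝ) + 1) * (1 - δ)⌉ : ℤ) ≤ n := Int.ceil_le.mpr (by exact_mod_cast hk)
  have hkn : k ≤ n := Int.toNat_le.mpr hceil_le
  have hkreal : ((n : ℝ) + 1) * (1 - δ) ≤ (k : ℝ) := by
    have h1 := Int.le_ceil (((n : ℝ) + 1) * (1 - δ))
    have hpos : (0 : ℝ) < ((n : ℝ) + 1) * (1 - δ) := by positivity
    have h2 : (0 : ℤ) ≤ ⌈((n : ℝ) + 1) * (1 - δ)⌉ := by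
      exact_mod_cast Int.ceil_nonneg hpos.le
    have h3 : ((k : ℕ) : ℝ) = ((⌈((n : ℝ) + 1) * (1 - δ)⌉ : ℤ) : ℝ) := by
      rw [hkdef]; exact_mod_cast Int.toNat_of_nonneg h2
    rw [h3]; exact h1
  -- the score map
  set S : Ω → (Fin (n + 1) → ℝ) := fun ω i => e i ω / u i with hS
  have hSmeas : Measurable S :=
    measurable_pi_lambda _ fun i => (hmeas i).div_const _
  set ν : Measure (Fin (n + 1) → ℝ) := Measure.map S μ with hν
  have hνprob : IsProbabilityMeasure ν := Measure.isProbabilityMeasure_map hSmeas.aemeasurable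
  set A : Fin (n + 1) → Set (Fin (n + 1) → ℝ) :=
    fun i => {v | v i ≤ Q (v ∘ i.succAbove)} with hA
  have hAmeas : ∀ i, MeasurableSet (A i) := fun i =>
    measurableSet_le (measurable_pi_apply i)
      (hQmeas.comp (measurable_pi_lambda _ fun j => measurable_pi_apply _))
  -- exchangeability: ν (A i) = ν (A last)
  have hνA : ∀ i, ν (A i) = ν (A (Fin.last n)) := by
    intro i
    have hgmeas : Measurable fun v : Fin (n + 1) → ℝ => fun j => v (insertPerm i j) :=
      measurable_pi_lambda _ fun j => measurable_pi_apply _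
    have hmap : Measure.map (fun v : Fin (n + 1) → ℝ => fun j => v (insertPerm i j)) ν = ν := by
      rw [hν, Measure.map_map hgmeas hSmeas]
      exact hexch (insertPerm i)
    have hpre : (fun v : Fin (n + 1) → ℝ => fun j => v (insertPerm i j)) ⁻¹' A (Fin.last n)
        = A i := by
      ext v
      simp only [Set.mem_preimage, hA, Set.mem_setOf_eq, insertPerm_last, Fin.succAbove_last]
      have : (fun j => v (insertPerm i j)) ∘ Fin.castSucc = v ∘ i.succAbove := by
        funext j; simp [Function.comp]
      rw [this]
    calc ν (A i) = ν ((fun v : Fin (n + 1) → ℝ => fun j => v (insertPerm i j)) ⁻¹'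
          A (Fin.last n)) := by rw [hpre]
      _ = (Measure.map (fun v : Fin (n + 1) → ℝ => fun j => v (insertPerm i j)) ν)
          (A (Fin.last n)) := (Measure.map_apply hgmeas (hAmeas _)).symm
      _ = ν (A (Fin.last n)) := by rw [hmap]
  -- counting bound
  have hcount : (k : ℝ≥0∞) ≤ ∑ i : Fin (n + 1), ν (A i) := by
    have hind : ∀ i, ν (A i) = ∫⁻ v, (A i).indicator 1 v ∂ν := fun i =>
      (lintegral_indicator_one (hAmeas i)).symm
    calc (k : ℝ≥0∞) = ∫⁻ _, (k : ℝ≥0∞) ∂ν := by simp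
      _ ≤ ∫⁻ v, ∑ i : Fin (n + 1), (A i).indicator 1 v ∂ν := by
          apply lintegral_mono
          intro v
          dsimp only
          have : ∑ i : Fin (n + 1), (A i).indicator (1 : (Fin (n+1) → ℝ) → ℝ≥0∞) v
              = ((Finset.univ.filter fun i : Fin (n + 1) =>
                  v i ≤ Q (v ∘ i.succAbove)).card : ℝ≥0∞) := by
            rw [← Finset.sum_boole]
            apply Finset.sum_congr rfl
            intro i _
            simp [Set.indicator_apply, hA, Set.mem_setOf_eq]
          rw [this]
          exact_mod_cast Nat.cast_le.mpr (count_lemma hkn Q hQ v)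
      _ = ∑ i : Fin (n + 1), ∫⁻ v, (A i).indicator 1 v ∂ν :=
          lintegral_finset_sum _ fun i _ => (measurable_one.indicator (hAmeas i))
      _ = ∑ i : Fin (n + 1), ν (A i) := by simp_rw [← hind]
  have hsum : ∑ i : Fin (n + 1), ν (A i) = (n + 1 : ℝ≥0∞) * ν (A (Fin.last n)) := by
    rw [Finset.sum_congr rfl fun i _ => hνA i]
    simp [Finset.sum_const, mul_comm]
  -- identify the target event
  have htarget : μ {ω | e (Fin.last n) ω ≤
      u (Fin.last n) * Q fun i => e i.castSucc ω / u i.castSucc} = ν (A (Fin.last n)) := by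
    rw [hν, Measure.map_apply hSmeas (hAmeas _)]
    congr 1
    ext ω
    simp only [Set.mem_preimage, hA, Set.mem_setOf_eq, hS, Fin.succAbove_last]
    rw [div_le_iff₀ (hu _), mul_comm]
    rfl
  rw [htarget]
  -- final arithmetic in ℝ≥0∞
  have hne : (n + 1 : ℝ≥0∞) ≠ 0 := by
    intro h
    have := add_eq_zero.mp h
    exact one_ne_zero this.2
  have hnt : (n + 1 : ℝ≥0∞) ≠ ⊤ := by
    exact_mod_cast ENNReal.natCast_ne_top (n + 1)
  rw [← ENNReal.mul_le_mul_iff_left hne hnt]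
  calc ENNReal.ofReal (1 - δ) * (n + 1 : ℝ≥0∞)
      = ENNReal.ofReal ((1 - δ) * ((n : ℝ) + 1)) := by
        rw [ENNReal.ofReal_mul hδ.le]
        congr 1
        rw [ENNReal.ofReal_add (by positivity) zero_le_one]
        simp
    _ ≤ (k : ℝ≥0∞) := by
        rw [← ENNReal.ofReal_natCast k]
        exact ENNReal.ofReal_le_ofReal (by linarith [hkreal])
    _ ≤ ∑ i : Fin (n + 1), ν (A i) := hcount
    _ = ν (A (Fin.last n)) * (n + 1 : ℝ≥0∞) := by rw [hsum, mul_comm]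
end
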